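/- For every natural number r ≥ 2, the ℂ[α,β,γ]-module K_r = J_{r−1}/(J_r + γ·J_{r−2}) is generated by the residue class of R¹_{r−1}, and this class is annihilated both by γ and by β + (−1)^r·8; consequently K_r is a cyclic module over the quotient ring ℂ[α,β,γ]/(J_r + (γ, β + (−1)^r·8)). -/
import Mathlib


open MvPolynomial

/-- The triple (R¹_r, R²_r, R³_r) of polynomials in ℂ[α,β,γ] (α = X 0, β = X 1, γ = X 2). -/
noncomputable def Rr : ℕ → MvPolynomial (Fin 3) ℂ × MvPolynomial (Fin 3) ℂ × MvPolynomial (Fin 3) ℂ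
  | 0 => (1, 0, 0)
  | (r + 1) =>
      (X 0 * (Rr r).1 + C ((r : ℂ) ^ 2) * (Rr r).2.1,
       (X 1 + C ((-1 : ℂ) ^ (r + 1) * 8)) * (Rr r).1 + C ((2 * r : ℂ) / (r + 1)) * (Rr r).2.2,
       X 2 * (Rr r).1)

/-- The ideal J_r = (R¹_r, R²_r, R³_r) ⊆ ℂ[α,β,γ]. -/
noncomputable def Jr (r : ℕ) : Ideal (MvPolynomial (Fin 3) ℂ) :=
  Ideal.span {(Rr r).1, (Rr r).2.1, (Rr r).2.2}


/-- The ideal J_r + γ·J_{r−2} ⊆ ℂ[α,β,γ]. -/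
noncomputable def Nid (r : ℕ) : Ideal (MvPolynomial (Fin 3) ℂ) :=
  Jr r ⊔ Ideal.span {X 2} * Jr (r - 2)

/-- The ℂ[α,β,γ]-module K_r = J_{r−1}/(J_r + γ·J_{r−2}), realized (since
J_r + γ·J_{r−2} ⊆ J_{r−1}) as the image of the ideal J_{r−1} in ℂ[α,β,γ]/(J_r + γ·J_{r−2}). -/
noncomputable def Kmod (r : ℕ) : Submodule (MvPolynomial (Fin 3) ℂ)
    (MvPolynomial (Fin 3) ℂ ⧸ Nid r) :=
  Submodule.restrictScalars (MvPolynomial (Fin 3) ℂ)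
    ((Jr (r - 1)).map (Ideal.Quotient.mk (Nid r)))

set_option synthInstance.maxHeartbeats 1000000 in
/-- For every r ≥ 2, the ℂ[α,β,γ]-module K_r = J_{r−1}/(J_r + γ·J_{r−2}) is generated by the
residue class of R¹_{r−1}, and this class is annihilated both by γ and by β + (−1)^r·8;
consequently K_r is a cyclic module over the quotient ring
ℂ[α,β,γ]/(J_r + (γ, β + (−1)^r·8)). -/
theorem stmt14 (r : ℕ) (hr : 2 ≤ r) :
    Kmod r = Submodule.span (MvPolynomial (Fin 3) ℂ)
        {Ideal.Quotient.mk (Nid r) (Rr (r - 1)).1} ∧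
    X 2 * (Rr (r - 1)).1 ∈ Nid r ∧
    (X 1 + C ((-1 : ℂ) ^ r * 8)) * (Rr (r - 1)).1 ∈ Nid r := by
  obtain ⟨t, rfl⟩ : ∃ t, r = t + 2 := ⟨r - 2, by omega⟩
  have hJle : Jr (t + 2) ≤ Nid (t + 2) := le_sup_left
  have mem1 : (Rr (t + 2)).1 ∈ Jr (t + 2) := Ideal.subset_span (by simp)
  have mem2 : (Rr (t + 2)).2.1 ∈ Jr (t + 2) := Ideal.subset_span (by simp)
  have mem3 : (Rr (t + 2)).2.2 ∈ Jr (t + 2) := Ideal.subset_span (by simp)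
  have hdef1 : (Rr (t + 2)).1
      = X 0 * (Rr (t + 1)).1 + C (((t + 1 : ℕ) : ℂ) ^ 2) * (Rr (t + 1)).2.1 := rfl
  have hdef2 : (Rr (t + 2)).2.1
      = (X 1 + C ((-1 : ℂ) ^ (t + 1 + 1) * 8)) * (Rr (t + 1)).1
        + C ((2 * (t + 1 : ℕ) : ℂ) / ((t + 1 : ℕ) + 1)) * (Rr (t + 1)).2.2 := rfl
  have hdef3 : (Rr (t + 2)).2.2 = X 2 * (Rr (t + 1)).1 := rfl
  have hdef3' : (Rr (t + 1)).2.2 = X 2 * (Rr t).1 := rfl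
  -- R³_{t+1} ∈ Nid (t+2) via γ·J_t
  have hR33 : (Rr (t + 1)).2.2 ∈ Nid (t + 2) := by
    rw [hdef3']
    exact Submodule.mem_sup_right
      (Ideal.mul_mem_mul (Ideal.subset_span rfl) (Ideal.subset_span (by simp)))
  -- γ · R¹_{t+1} ∈ Nid (t+2)
  have hgamma : X 2 * (Rr (t + 1)).1 ∈ Nid (t + 2) := by
    rw [← hdef3]; exact hJle mem3
  -- (β + (−1)^r 8) · R¹_{t+1} ∈ Nid (t+2)
  have hbeta : (X 1 + C ((-1 : ℂ) ^ (t + 2) * 8)) * (Rr (t + 1)).1 ∈ Nid (t + 2) := by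
    have heq : (X 1 + C ((-1 : ℂ) ^ (t + 2) * 8)) * (Rr (t + 1)).1
        = (Rr (t + 2)).2.1
          - C ((2 * (t + 1 : ℕ) : ℂ) / ((t + 1 : ℕ) + 1)) * (Rr (t + 1)).2.2 := by
      rw [hdef2]; ring_nf
    rw [heq]
    exact sub_mem (hJle mem2) (Ideal.mul_mem_left _ _ hR33)
  refine ⟨?_, hgamma, hbeta⟩
  -- the span statement
  have hmk : Function.Surjective (Ideal.Quotient.mk (Nid (t + 2))) :=
    Ideal.Quotient.mk_surjective
  have hK : Kmod (t + 2) = Submodule.span (MvPolynomial (Fin 3) ℂ)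
      ({Ideal.Quotient.mk (Nid (t + 2)) (Rr (t + 1)).1,
        Ideal.Quotient.mk (Nid (t + 2)) (Rr (t + 1)).2.1,
        Ideal.Quotient.mk (Nid (t + 2)) (Rr (t + 1)).2.2} :
        Set (MvPolynomial (Fin 3) ℂ ⧸ Nid (t + 2))) := by
    show Submodule.restrictScalars _ ((Jr (t + 1)).map (Ideal.Quotient.mk (Nid (t + 2)))) = _
    rw [Jr, Ideal.map_span, Set.image_insert_eq, Set.image_insert_eq, Set.image_singleton]
    exact Submodule.restrictScalars_span _ _ (by rwa [Ideal.Quotient.algebraMap_eq]) _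
  rw [hK]
  apply le_antisymm
  · rw [Submodule.span_le]
    have ha : Ideal.Quotient.mk (Nid (t + 2)) (Rr (t + 1)).1 ∈
        Submodule.span (MvPolynomial (Fin 3) ℂ)
          {Ideal.Quotient.mk (Nid (t + 2)) (Rr (t + 1)).1} :=
      Submodule.subset_span rfl
    have hc : Ideal.Quotient.mk (Nid (t + 2)) (Rr (t + 1)).2.2 = 0 :=
      (Ideal.Quotient.eq_zero_iff_mem).mpr hR33
    have hb : Ideal.Quotient.mk (Nid (t + 2)) (Rr (t + 1)).2.1 ∈
        Submodule.span (MvPolynomial (Fin 3) ℂ)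
          {Ideal.Quotient.mk (Nid (t + 2)) (Rr (t + 1)).1} := by
      have hk : (((t + 1 : ℕ) : ℂ)) ^ 2 ≠ 0 :=
        pow_ne_zero 2 (Nat.cast_ne_zero.mpr (Nat.succ_ne_zero t))
      have hmkeq : Ideal.Quotient.mk (Nid (t + 2)) (Rr (t + 1)).2.1
          = Ideal.Quotient.mk (Nid (t + 2))
              ((C ((((t + 1 : ℕ) : ℂ)) ^ 2)⁻¹ * (-(X 0))) * (Rr (t + 1)).1) := by
        rw [Ideal.Quotient.eq]
        have hsum : (Rr (t + 1)).2.1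
            - (C ((((t + 1 : ℕ) : ℂ)) ^ 2)⁻¹ * (-(X 0))) * (Rr (t + 1)).1
            = C ((((t + 1 : ℕ) : ℂ)) ^ 2)⁻¹ * (Rr (t + 2)).1 := by
          have hCk : C ((((t + 1 : ℕ) : ℂ)) ^ 2)⁻¹ * C ((((t + 1 : ℕ) : ℂ)) ^ 2)
              = (1 : MvPolynomial (Fin 3) ℂ) := by
            rw [← C_mul, inv_mul_cancel₀ hk, C_1]
          rw [hdef1]
          linear_combination (-(Rr (t + 1)).2.1) * hCk
        rw [hsum]
        exact Ideal.mul_mem_left _ _ (hJle mem1)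
      rw [hmkeq, ← Ideal.Quotient.algebraMap_eq, map_mul, ← Algebra.smul_def]
      exact Submodule.smul_mem _ _ ha
    simp only [Set.insert_subset_iff, Set.singleton_subset_iff]
    exact ⟨ha, hb, hc ▸ zero_mem _⟩
  · rw [Submodule.span_le, Set.singleton_subset_iff]
    exact Submodule.subset_span (by simp)
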